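/- Let A ∈ ℝ^{n×n} be Hurwitz, B ∈ ℝ^{n×m}, M ∈ ℝ^{n×n} symmetric, and let P := ∫₀^∞ exp(Aτ) B Bᵀ exp(Aᵀτ) dτ be the controllability Gramian. Then ∫₀^∞ ∫₀^∞ ‖Bᵀ exp(Aᵀσ₁) M exp(Aσ₂) B‖_F² dσ₁ dσ₂ = tr(P M P M), where ‖·‖_F denotes the Frobenius norm. -/

import Mathlib

open Matrix MeasureTheory NormedSpace
open scoped Nat NNReal ENNReal

section SpecAux

attribute [local instance] Matrix.linftyOpNormedAddCommGroup Matrix.linftyOpNormedRing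
  Matrix.linftyOpNormedAlgebra

variable {n : ℕ}

/-- reverse spectral mapping for exp on complex matrices -/
lemma spec_exp_rev (Ac : Matrix (Fin n) (Fin n) ℂ) {μ : ℂ}
    (hμ : μ ∈ spectrum ℂ (exp Ac)) :
    ∃ l ∈ spectrum ℂ Ac, μ = Complex.exp l := by
  classical
  set e := Matrix.toLinAlgEquiv (Pi.basisFun ℂ (Fin n))
  have hg : Module.End.HasEigenvalue (Matrix.toLin' (exp Ac)) μ := by
    rw [Module.End.hasEigenvalue_iff_mem_spectrum]
    rwa [← AlgEquiv.spectrum_eq e] at hμ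
  set f : Module.End ℂ (Fin n → ℂ) := Matrix.toLin' Ac with hf
  set g : Module.End ℂ (Fin n → ℂ) := Matrix.toLin' (exp Ac) with hgdef
  have hcomm : f * g = g * f := by
    have h1 : f * g = Matrix.toLin' (Ac * exp Ac) := by
      rw [hf, hgdef, Matrix.toLin'_mul]; rfl
    have h2 : g * f = Matrix.toLin' (exp Ac * Ac) := by
      rw [hf, hgdef, Matrix.toLin'_mul]; rfl
    rw [h1, h2, ((Commute.refl Ac).exp_right).eq]
  set W := Module.End.eigenspace g μ with hW
  have hWinv : ∀ x ∈ W, f x ∈ W := by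
    intro x hx
    rw [hW, Module.End.mem_eigenspace_iff] at hx ⊢
    have : g (f x) = f (g x) := by
      rw [← Module.End.mul_apply, ← Module.End.mul_apply, hcomm]
    rw [this, hx, _root_.map_smul]
  have hWnt : Nontrivial W := by
    refine Submodule.nontrivial_iff_ne_bot.mpr ?_
    exact hg
  obtain ⟨l, hl⟩ := Module.End.exists_eigenvalue (f.restrict hWinv)
  obtain ⟨⟨w, hwW⟩, hwv⟩ := hl.exists_hasEigenvector
  have hw0 : w ≠ 0 := by
    intro h
    exact hwv.right (by simp [h, Submodule.mk_eq_zero])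
  have hfw : f w = l • w := by
    have := hwv.apply_eq_smul
    have := congrArg (Subtype.val) this
    simpa [LinearMap.restrict_apply] using this
  -- l ∈ spectrum Ac
  have hl_spec : l ∈ spectrum ℂ Ac := by
    rw [← AlgEquiv.spectrum_eq e, ← Module.End.hasEigenvalue_iff_mem_spectrum]
    exact Module.End.hasEigenvalue_of_hasEigenvector ⟨Module.End.mem_eigenspace_iff.mpr hfw, hw0⟩
  refine ⟨l, hl_spec, ?_⟩
  -- compute (exp Ac).mulVec w
  have hmul : Ac.mulVec w = l • w := by
    rw [← Matrix.toLin'_apply Ac w]; exact hfw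
  have hpow : ∀ k : ℕ, (Ac ^ k).mulVec w = l ^ k • w := by
    intro k
    induction k with
    | zero => simp
    | succ k ih =>
      rw [pow_succ, ← Matrix.mulVec_mulVec, hmul, Matrix.mulVec_smul, ih,
        smul_smul, pow_succ]
      ring_nf
  have hgw : (exp Ac).mulVec w = μ • w := by
    have := hwW
    rw [hW, Module.End.mem_eigenspace_iff] at this
    rw [← Matrix.toLin'_apply (exp Ac) w]; exact this
  have hsum : (exp Ac).mulVec w = Complex.exp l • w := by
    set T : Matrix (Fin n) (Fin n) ℂ →L[ℂ] (Fin n → ℂ) :=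
      LinearMap.toContinuousLinearMap
        { toFun := fun X => X.mulVec w
          map_add' := fun X Y => Matrix.add_mulVec X Y w
          map_smul' := fun c X => Matrix.smul_mulVec c X w } with hTdef
    have hT : ∀ X : Matrix (Fin n) (Fin n) ℂ, T X = X.mulVec w := fun X => rfl
    have hsummable : Summable fun k : ℕ => ((k !)⁻¹ : ℂ) • Ac ^ k :=
      expSeries_summable' (𝕂 := ℂ) Ac
    calc (exp Ac).mulVec w = T (∑' k : ℕ, ((k !)⁻¹ : ℂ) • Ac ^ k) := by
          rw [hT, exp_eq_tsum ℂ]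
      _ = ∑' k : ℕ, T (((k !)⁻¹ : ℂ) • Ac ^ k) := (T.map_tsum hsummable)
      _ = ∑' k : ℕ, ((k !)⁻¹ : ℂ) • (l ^ k • w) := by
          simp_rw [_root_.map_smul, hT, hpow]
      _ = ∑' k : ℕ, (((k !)⁻¹ : ℂ) * l ^ k) • w := by simp_rw [smul_smul]
      _ = (∑' k : ℕ, ((k !)⁻¹ : ℂ) * l ^ k) • w := by
          refine Summable.tsum_smul_const ?_ w
          simpa [smul_eq_mul] using expSeries_summable' (𝕂 := ℂ) (𝔸 := ℂ) l
      _ = Complex.exp l • w := by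
          congr 1
          rw [Complex.exp_eq_exp_ℂ, exp_eq_tsum ℂ]
          simp only [smul_eq_mul]
  have : (μ - Complex.exp l) • w = 0 := by
    rw [sub_smul, ← hgw, hsum, sub_self]
  rcases smul_eq_zero.mp this with h | h
  · exact (sub_eq_zero.mp h)
  · exact absurd h hw0


lemma nnnorm_entry_le (X : Matrix (Fin n) (Fin n) ℂ) (i j : Fin n) : ‖X i j‖ ≤ ‖X‖ := by
  have h1 : ‖X i j‖₊ ≤ ∑ j' : Fin n, ‖X i j'‖₊ :=
    Finset.single_le_sum (f := fun j' => ‖X i j'‖₊) (fun _ _ => zero_le) (Finset.mem_univ j)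
  have h2 : (∑ j' : Fin n, ‖X i j'‖₊) ≤ ‖X‖₊ := by
    have := Matrix.linfty_opNNNorm_def X
    rw [this]
    exact Finset.le_sup (f := fun i : Fin n => ∑ j' : Fin n, ‖X i j'‖₊) (Finset.mem_univ i)
  exact_mod_cast h1.trans h2

lemma gelfand_decay (E : Matrix (Fin n) (Fin n) ℂ)
    (hE : ∀ μ ∈ spectrum ℂ E, ‖μ‖₊ < 1) :
    ∃ ρ : ℝ≥0, 0 < ρ ∧ ρ < 1 ∧ ∃ C : ℝ, 0 < C ∧ ∀ k : ℕ, ‖E ^ k‖ ≤ C * (ρ:ℝ) ^ k := by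
  classical
  set s := (Matrix.finite_spectrum E).toFinset with hs
  set rbar : ℝ≥0 := s.sup (fun μ => ‖μ‖₊) with hrbar
  have hrbarlt : rbar < 1 := by
    rw [hrbar]
    refine Finset.sup_lt_iff (by norm_num) |>.mpr ?_
    intro μ hμ
    exact hE μ (by simpa [hs] using hμ)
  have hsr : spectralRadius ℂ E ≤ (rbar : ENNReal) := by
    refine iSup₂_le fun μ hμ => ?_
    exact_mod_cast ENNReal.coe_le_coe.mpr (Finset.le_sup (f := fun μ => ‖μ‖₊)
      ((Matrix.finite_spectrum E).mem_toFinset.mpr hμ))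
  set ρ : ℝ≥0 := (rbar + 1) / 2 with hρdef
  have hρpos : 0 < ρ := by positivity
  have hρlt1 : ρ < 1 := by
    rw [hρdef]
    rw [div_lt_one (by norm_num : (0:ℝ≥0) < 2)]
    calc rbar + 1 < 1 + 1 := by exact add_lt_add_left hrbarlt 1
    _ = 2 := by norm_num
  have hrbarltρ : (rbar : ENNReal) < (ρ : ENNReal) := by
    rw [ENNReal.coe_lt_coe, hρdef]
    rw [lt_div_iff₀ (by norm_num : (0:ℝ≥0) < 2)]
    calc rbar * 2 = rbar + rbar := by ring
    _ < rbar + 1 := by exact add_lt_add_right hrbarlt rbar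
  have hgel := spectrum.pow_nnnorm_pow_one_div_tendsto_nhds_spectralRadius E
  have hev : ∀ᶠ k : ℕ in Filter.atTop,
      ((‖E ^ k‖₊ : ENNReal) ^ (1 / (k:ℝ))) < (ρ : ENNReal) :=
    hgel.eventually_lt_const (lt_of_le_of_lt hsr hrbarltρ)
  obtain ⟨N, hN⟩ := (hev.and (Filter.eventually_ge_atTop 1)).exists_forall_of_atTop
  have key : ∀ k : ℕ, N ≤ k → ‖E ^ k‖₊ ≤ ρ ^ k := by
    intro k hk
    obtain ⟨h1, h2⟩ := hN k hk
    have hk0 : (k : ℝ) ≠ 0 := by positivity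
    have := ENNReal.rpow_le_rpow h1.le (by positivity : (0:ℝ) ≤ (k:ℝ))
    rw [← ENNReal.rpow_mul, one_div, inv_mul_cancel₀ hk0, ENNReal.rpow_one] at this
    have h3 : (‖E ^ k‖₊ : ENNReal) ≤ ((ρ ^ k : ℝ≥0) : ENNReal) := by
      rw [ENNReal.coe_pow]
      exact le_trans this (ENNReal.rpow_natCast _ k).le
    exact_mod_cast h3
  set C : ℝ := 1 + ∑ k ∈ Finset.range (N + 1), ‖E ^ k‖ / (ρ:ℝ) ^ k with hC
  have hC1 : (1:ℝ) ≤ C := by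
    rw [hC]
    exact le_add_of_nonneg_right (Finset.sum_nonneg fun k _ => by positivity)
  have hCpos : 0 < C := lt_of_lt_of_le one_pos hC1
  refine ⟨ρ, hρpos, hρlt1, C, hCpos, fun k => ?_⟩
  rcases le_or_gt N k with h | h
  · calc ‖E ^ k‖ ≤ (ρ:ℝ) ^ k := by exact_mod_cast key k h
    _ = 1 * (ρ:ℝ) ^ k := by ring
    _ ≤ C * (ρ:ℝ) ^ k := by
        exact mul_le_mul_of_nonneg_right hC1 (by positivity)
  · have hmem : k ∈ Finset.range (N + 1) := Finset.mem_range.mpr (by omega)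
    have h1 : ‖E ^ k‖ / (ρ:ℝ) ^ k ≤ ∑ j ∈ Finset.range (N + 1), ‖E ^ j‖ / (ρ:ℝ) ^ j :=
      Finset.single_le_sum (f := fun j => ‖E ^ j‖ / (ρ:ℝ) ^ j)
        (fun j _ => by positivity) hmem
    have h2 : ‖E ^ k‖ / (ρ:ℝ) ^ k ≤ C := by
      rw [hC]
      linarith [h1]
    calc ‖E ^ k‖ = (‖E ^ k‖ / (ρ:ℝ) ^ k) * (ρ:ℝ) ^ k := by
          field_simp
    _ ≤ C * (ρ:ℝ) ^ k := mul_le_mul_of_nonneg_right h2 (by positivity)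

lemma exp_entry_decay (A : Matrix (Fin n) (Fin n) ℝ)
    (hA : ∀ μ ∈ spectrum ℂ (A.map (Complex.ofReal ·)), μ.re < 0) :
    ∃ C : ℝ, 0 < C ∧ ∃ δ : ℝ, 0 < δ ∧ ∀ t : ℝ, 0 ≤ t → ∀ i j : Fin n,
      |(exp (t • A)) i j| ≤ C * Real.exp (-(δ * t)) := by
  classical
  set Ac := A.map (Complex.ofReal ·) with hAc
  have hmapexp : ∀ X : Matrix (Fin n) (Fin n) ℝ,
      (exp X).map (Complex.ofReal ·) = exp (X.map (Complex.ofReal ·)) := by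
    intro X
    have hφ : Continuous (Complex.ofRealHom.mapMatrix :
        Matrix (Fin n) (Fin n) ℝ →+* Matrix (Fin n) (Fin n) ℂ) :=
      continuous_id.matrix_map Complex.continuous_ofReal
    have h1 := map_exp (Complex.ofRealHom.mapMatrix :
        Matrix (Fin n) (Fin n) ℝ →+* Matrix (Fin n) (Fin n) ℂ) hφ X
    have h2 : (Complex.ofRealHom.mapMatrix :
        Matrix (Fin n) (Fin n) ℝ →+* Matrix (Fin n) (Fin n) ℂ) (exp X)
        = (exp X).map (Complex.ofReal ·) := rfl
    have h3 : (Complex.ofRealHom.mapMatrix :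
        Matrix (Fin n) (Fin n) ℝ →+* Matrix (Fin n) (Fin n) ℂ) X
        = X.map (Complex.ofReal ·) := rfl
    exact h1
  have hspec : ∀ μ ∈ spectrum ℂ (exp Ac), ‖μ‖₊ < 1 := by
    intro μ hμ
    obtain ⟨l, hl, rfl⟩ := spec_exp_rev Ac hμ
    have : ‖Complex.exp l‖ < 1 := by
      rw [Complex.norm_exp]
      exact Real.exp_lt_one_iff.mpr (hA l hl)
    exact_mod_cast this
  obtain ⟨ρ, hρ0, hρ1, C₁, hC₁, hpow⟩ := gelfand_decay (exp Ac) hspec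
  have hρ0' : (0:ℝ) < (ρ:ℝ) := by exact_mod_cast hρ0
  have hρ1' : (ρ:ℝ) < 1 := by exact_mod_cast hρ1
  obtain ⟨K, hK⟩ := (isCompact_Icc (a := (0:ℝ)) (b := 1)).exists_bound_of_continuousOn
    (f := fun s : ℝ => exp (s • Ac))
    ((exp_continuous.comp (continuous_id.smul continuous_const)).continuousOn)
  set δ : ℝ := -Real.log (ρ:ℝ) with hδdef
  have hδ : 0 < δ := by
    rw [hδdef]
    simpa using Real.log_neg hρ0' hρ1'
  set C : ℝ := max 1 (C₁ * K * Real.exp δ) with hCdef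
  have hCpos : 0 < C := lt_of_lt_of_le one_pos (le_max_left _ _)
  refine ⟨C, hCpos, δ, hδ, fun t ht i j => ?_⟩
  set k : ℕ := ⌊t⌋₊ with hk
  set sfr : ℝ := t - k with hsfr
  have hs0 : 0 ≤ sfr := by
    rw [hsfr]
    have := Nat.floor_le ht
    linarith
  have hs1 : sfr ≤ 1 := by
    rw [hsfr]
    have := Nat.lt_floor_add_one t
    push_cast at this ⊢
    linarith
  -- entry equals complex entry
  have hent : ((exp (t • A)) i j : ℂ) = (exp (t • Ac)) i j := by
    have h1 := hmapexp (t • A)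
    have h2 : (t • A).map (Complex.ofReal ·) = t • Ac := by
      ext a b
      simp [hAc, Matrix.map_apply, Matrix.smul_apply, Complex.real_smul, Complex.ofReal_mul]
    rw [h2] at h1
    have := congrFun (congrFun h1 i) j
    simpa [Matrix.map_apply] using this
  have habs : |(exp (t • A)) i j| = ‖(exp (t • Ac)) i j‖ := by
    rw [← hent, Complex.norm_real, Real.norm_eq_abs]
  rw [habs]
  have hentry_le := nnnorm_entry_le (exp (t • Ac)) i j
  -- split exp
  have hsplit : exp (t • Ac) = (exp Ac) ^ k * exp (sfr • Ac) := by
    have hts : t • Ac = (k:ℝ) • Ac + sfr • Ac := by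
      rw [← add_smul]
      congr 1
      rw [hsfr]; ring
    rw [hts, Matrix.exp_add_of_commute _ _ (((Commute.refl Ac).smul_left ((k:ℝ))).smul_right sfr),
      Nat.cast_smul_eq_nsmul ℝ k Ac, Matrix.exp_nsmul]
  have hnorm1 : ‖(exp Ac) ^ k‖ ≤ C₁ * (ρ:ℝ) ^ k := hpow k
  have hnorm2 : ‖exp (sfr • Ac)‖ ≤ K := hK sfr ⟨hs0, hs1⟩
  have hmulnorm : ‖exp (t • Ac)‖ ≤ (C₁ * (ρ:ℝ) ^ k) * K := by
    rw [hsplit]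
    exact le_trans (norm_mul_le _ _)
      (mul_le_mul hnorm1 hnorm2 (norm_nonneg _) (le_trans (norm_nonneg _) hnorm1))
  have hrk : (ρ:ℝ) ^ k ≤ Real.exp δ * Real.exp (-(δ * t)) := by
    have h1 : (ρ:ℝ) ^ k = Real.exp ((k:ℝ) * Real.log (ρ:ℝ)) := by
      rw [Real.exp_nat_mul, Real.exp_log hρ0']
    have h2 : (k:ℝ) * Real.log (ρ:ℝ) ≤ (t - 1) * Real.log (ρ:ℝ) := by
      have hlog : Real.log (ρ:ℝ) ≤ 0 := (Real.log_neg hρ0' hρ1').le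
      have hkt : t - 1 ≤ (k:ℝ) := by
        have := Nat.lt_floor_add_one t
        push_cast at this
        linarith
      exact mul_le_mul_of_nonpos_right hkt hlog
    rw [h1, ← Real.exp_add]
    apply Real.exp_le_exp.mpr
    rw [hδdef]; nlinarith [h2]
  have hKnn : 0 ≤ K := le_trans (norm_nonneg _) hnorm2
  calc ‖(exp (t • Ac)) i j‖ ≤ ‖exp (t • Ac)‖ := hentry_le
    _ ≤ (C₁ * (ρ:ℝ) ^ k) * K := hmulnorm
    _ ≤ (C₁ * (Real.exp δ * Real.exp (-(δ * t)))) * K := by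
        apply mul_le_mul_of_nonneg_right _ hKnn
        exact mul_le_mul_of_nonneg_left hrk hC₁.le
    _ = (C₁ * K * Real.exp δ) * Real.exp (-(δ * t)) := by ring
    _ ≤ C * Real.exp (-(δ * t)) := by
        exact mul_le_mul_of_nonneg_right (le_max_right _ _) (Real.exp_pos _).le

lemma exp_entry_continuous (A : Matrix (Fin n) (Fin n) ℝ) (i j : Fin n) :
    Continuous fun t : ℝ => (exp (t • A)) i j := by
  have h : Continuous fun t : ℝ => exp (t • A) :=
    exp_continuous.comp (continuous_id.smul continuous_const)
  exact (continuous_apply j).comp ((continuous_apply i).comp h)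

end SpecAux


section Helpers

variable {n m : ℕ}

lemma trace_transpose_mul_self (X : Matrix (Fin m) (Fin n) ℝ) :
    Matrix.trace (Xᵀ * X) = ∑ i, ∑ j, (X i j) ^ 2 := by
  simp only [Matrix.trace, Matrix.diag, Matrix.mul_apply, Matrix.transpose_apply, sq]
  exact Finset.sum_comm

lemma trace_mul_eq_sum_prod (Z W : Matrix (Fin n) (Fin n) ℝ) :
    (Z * W).trace = ∑ p : Fin n × Fin n, Z p.1 p.2 * W p.2 p.1 := by
  rw [Fintype.sum_prod_type]
  simp only [Matrix.trace, Matrix.diag, Matrix.mul_apply]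

lemma mul3_apply (X : Matrix (Fin n) (Fin n) ℝ) (Y : Matrix (Fin n) (Fin n) ℝ)
    (Z : Matrix (Fin n) (Fin n) ℝ) (a b : Fin n) :
    (X * Y * Z) a b = ∑ c, ∑ d, X a c * Y c d * Z d b := by
  simp only [Matrix.mul_apply, Finset.sum_mul]
  rw [Finset.sum_comm]

lemma kernel_trace_identity (B : Matrix (Fin n) (Fin m) ℝ) (M : Matrix (Fin n) (Fin n) ℝ)
    (hM : Mᵀ = M) (E1 E2 : Matrix (Fin n) (Fin n) ℝ) :
    ∑ i, ∑ j, ((Bᵀ * E1ᵀ * M * E2 * B) i j) ^ 2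
      = ∑ p : Fin n × Fin n,
          (M * (E1 * (B * Bᵀ) * E1ᵀ) * M) p.1 p.2 * (E2 * (B * Bᵀ) * E2ᵀ) p.2 p.1 := by
  rw [← trace_transpose_mul_self, ← trace_mul_eq_sum_prod]
  have ht : (Bᵀ * E1ᵀ * M * E2 * B)ᵀ = Bᵀ * E2ᵀ * M * E1 * B := by
    simp only [Matrix.transpose_mul, Matrix.transpose_transpose, hM, Matrix.mul_assoc]
  rw [ht]
  have h1 : Bᵀ * E2ᵀ * M * E1 * B * (Bᵀ * E1ᵀ * M * E2 * B)
      = (Bᵀ * E2ᵀ * M * E1 * B * (Bᵀ * (E1ᵀ * (M * E2)))) * B := by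
    simp only [Matrix.mul_assoc]
  rw [h1, Matrix.trace_mul_comm]
  have h2 : B * (Bᵀ * E2ᵀ * M * E1 * B * (Bᵀ * (E1ᵀ * (M * E2))))
      = (B * (Bᵀ * E2ᵀ)) * (M * (E1 * (B * Bᵀ) * E1ᵀ) * (M * E2)) := by
    simp only [Matrix.mul_assoc]
  rw [h2, Matrix.trace_mul_comm]
  congr 1
  simp only [Matrix.mul_assoc]

end Helpers

attribute [local instance] Matrix.normedAddCommGroup Matrix.normedSpace

/-- For a Hurwitz matrix `A`, symmetric `M` and the controllability Gramian `P`, the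
squared `L₂` norm of the quadratic Volterra kernel
`h₂(σ₁,σ₂) = vec(Bᵀ exp(Aᵀσ₁) M exp(Aσ₂) B)ᵀ` equals `tr(P M P M)`; the squared
Frobenius norm is written as the sum of the squares of the entries. -/
theorem quadratic_kernel_l2_norm {n m : ℕ}
    (A M : Matrix (Fin n) (Fin n) ℝ) (B : Matrix (Fin n) (Fin m) ℝ)
    (hM : M.IsSymm)
    (hA : ∀ μ ∈ spectrum ℂ (A.map (Complex.ofReal ·)), μ.re < 0)
    (P : Matrix (Fin n) (Fin n) ℝ)
    (hP : P = ∫ τ : ℝ in Set.Ioi 0, NormedSpace.exp (τ • A) * B * Bᵀ * NormedSpace.exp (τ • Aᵀ)) :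
    (∫ σ : ℝ × ℝ in Set.Ioi (0:ℝ) ×ˢ Set.Ioi (0:ℝ),
      ∑ i, ∑ j, ((Bᵀ * NormedSpace.exp (σ.1 • Aᵀ) * M * NormedSpace.exp (σ.2 • A) * B) i j) ^ 2) =
      (P * M * P * M).trace := by
  classical
  obtain ⟨C, hC, δ, hδ, hdecay⟩ := exp_entry_decay A hA
  set W : Matrix (Fin n) (Fin n) ℝ := B * Bᵀ with hW
  set E : ℝ → Matrix (Fin n) (Fin n) ℝ := fun t => exp (t • A) with hE
  have hET : ∀ t : ℝ, exp (t • Aᵀ) = (E t)ᵀ := by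
    intro t
    rw [hE]
    show exp (t • Aᵀ) = (exp (t • A))ᵀ
    rw [← Matrix.transpose_smul, Matrix.exp_transpose]
  set G : ℝ → Matrix (Fin n) (Fin n) ℝ := fun t => E t * W * (E t)ᵀ with hG
  have hPG : P = ∫ τ : ℝ in Set.Ioi 0, G τ := by
    rw [hP]
    congr 1
    funext τ
    rw [hG, hW, hE]
    show exp (τ • A) * B * Bᵀ * exp (τ • Aᵀ)
      = exp (τ • A) * (B * Bᵀ) * (exp (τ • A))ᵀ
    rw [← hET]
    simp only [Matrix.mul_assoc]
  -- entry formula for G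
  have hGentry : ∀ (t : ℝ) (a b : Fin n),
      G t a b = ∑ c, ∑ d, E t a c * W c d * E t b d := by
    intro t a b
    rw [hG]
    show (E t * W * (E t)ᵀ) a b = _
    rw [mul3_apply]
    refine Finset.sum_congr rfl fun c _ => Finset.sum_congr rfl fun d _ => ?_
    rw [Matrix.transpose_apply]
  -- entrywise continuity
  have hEcont : ∀ a b : Fin n, Continuous fun t : ℝ => E t a b := by
    intro a b
    exact exp_entry_continuous A a b
  have hGcont_entry : ∀ a b : Fin n, Continuous fun t : ℝ => G t a b := by
    intro a b
    have : (fun t : ℝ => G t a b) = fun t => ∑ c, ∑ d, E t a c * W c d * E t b d :=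
      funext fun t => hGentry t a b
    rw [this]
    refine continuous_finset_sum _ fun c _ => continuous_finset_sum _ fun d _ => ?_
    exact ((hEcont a c).mul continuous_const).mul (hEcont b d)
  -- bounds
  set S : ℝ := ∑ c : Fin n, ∑ d : Fin n, |W c d| with hS
  have hS0 : 0 ≤ S := Finset.sum_nonneg fun c _ => Finset.sum_nonneg fun d _ => abs_nonneg _
  have h2δ : 0 < 2 * δ := by linarith
  have hGbd : ∀ t : ℝ, 0 ≤ t → ∀ a b : Fin n,
      |G t a b| ≤ C * C * S * Real.exp (-(2 * δ * t)) := by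
    intro t ht a b
    have eexp : Real.exp (-(2 * δ * t)) = Real.exp (-(δ * t)) * Real.exp (-(δ * t)) := by
      rw [← Real.exp_add]; ring_nf
    have hterm : ∀ c d : Fin n,
        |E t a c * W c d * E t b d| ≤ C * C * |W c d| * Real.exp (-(2 * δ * t)) := by
      intro c d
      have e1 : |E t a c| ≤ C * Real.exp (-(δ * t)) := hdecay t ht a c
      have e2 : |E t b d| ≤ C * Real.exp (-(δ * t)) := hdecay t ht b d
      have hx0 : (0:ℝ) ≤ C * Real.exp (-(δ * t)) := by positivity
      calc |E t a c * W c d * E t b d| = |E t a c| * |W c d| * |E t b d| := by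
            rw [abs_mul, abs_mul]
        _ ≤ (C * Real.exp (-(δ * t))) * |W c d| * (C * Real.exp (-(δ * t))) := by
            refine mul_le_mul (mul_le_mul_of_nonneg_right e1 (abs_nonneg _)) e2
              (abs_nonneg _) ?_
            exact mul_nonneg hx0 (abs_nonneg _)
        _ = C * C * |W c d| * (Real.exp (-(δ * t)) * Real.exp (-(δ * t))) := by ring
        _ = C * C * |W c d| * Real.exp (-(2 * δ * t)) := by rw [← eexp]
    calc |G t a b| = |∑ c, ∑ d, E t a c * W c d * E t b d| := by rw [hGentry]
      _ ≤ ∑ c, |∑ d, E t a c * W c d * E t b d| := Finset.abs_sum_le_sum_abs _ _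
      _ ≤ ∑ c, ∑ d, |E t a c * W c d * E t b d| :=
          Finset.sum_le_sum fun c _ => Finset.abs_sum_le_sum_abs _ _
      _ ≤ ∑ c : Fin n, ∑ d : Fin n, C * C * |W c d| * Real.exp (-(2 * δ * t)) :=
          Finset.sum_le_sum fun c _ => Finset.sum_le_sum fun d _ => hterm c d
      _ = C * C * S * Real.exp (-(2 * δ * t)) := by
          rw [hS]
          simp only [Finset.mul_sum, Finset.sum_mul]
  -- integrability of the matrix-valued G
  have hgbound : IntegrableOn (fun t : ℝ => C * C * S * Real.exp (-(2 * δ * t)))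
      (Set.Ioi 0) := by
    have h0 := (exp_neg_integrableOn_Ioi 0 h2δ).const_mul (C * C * S)
    simpa only [neg_mul, IntegrableOn] using h0
  have hGcont : Continuous G := continuous_matrix fun a b => hGcont_entry a b
  letI : ContinuousENorm (Matrix (Fin n) (Fin n) ℝ) :=
    @SeminormedAddGroup.toContinuousENorm _ inferInstance
  letI : TopologicalSpace.PseudoMetrizableSpace (Matrix (Fin n) (Fin n) ℝ) :=
    inferInstanceAs (TopologicalSpace.PseudoMetrizableSpace (Fin n → Fin n → ℝ))
  have hGint : IntegrableOn G (Set.Ioi 0) := by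
    refine Integrable.mono' hgbound (hGcont.aestronglyMeasurable.restrict) ?_
    rw [ae_restrict_iff' measurableSet_Ioi]
    refine Filter.Eventually.of_forall fun t ht => ?_
    refine (Matrix.norm_le_iff (by positivity)).mpr fun a b => ?_
    rw [Real.norm_eq_abs]
    exact hGbd t (le_of_lt ht) a b
  -- entry CLMs
  have hPab : ∀ a b : Fin n, (∫ t in Set.Ioi (0:ℝ), G t a b) = P a b := by
    intro a b
    set L : Matrix (Fin n) (Fin n) ℝ →L[ℝ] ℝ :=
      LinearMap.toContinuousLinearMap
        { toFun := fun X : Matrix (Fin n) (Fin n) ℝ => X a b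
          map_add' := fun X Y => rfl
          map_smul' := fun c X => rfl } with hL
    have hLa : ∀ X : Matrix (Fin n) (Fin n) ℝ, L X = X a b := fun X => rfl
    have h := L.integral_comp_comm hGint
    change (∫ t in Set.Ioi (0:ℝ), G t a b) = (∫ t in Set.Ioi (0:ℝ), G t) a b at h
    rw [h, hPG]
  have hHab : ∀ a b : Fin n,
      (∫ t in Set.Ioi (0:ℝ), (M * G t * M) a b) = (M * P * M) a b := by
    intro a b
    set L : Matrix (Fin n) (Fin n) ℝ →L[ℝ] ℝ :=
      LinearMap.toContinuousLinearMap
        { toFun := fun X => (M * X * M) a b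
          map_add' := fun X Y => by
            simp [Matrix.mul_add, Matrix.add_mul]
          map_smul' := fun c X => by
            simp [Matrix.mul_smul, Matrix.smul_mul] } with hL
    have hLa : ∀ X : Matrix (Fin n) (Fin n) ℝ, L X = (M * X * M) a b := fun X => rfl
    have h := L.integral_comp_comm hGint
    change (∫ t in Set.Ioi (0:ℝ), (M * G t * M) a b) = (M * (∫ t in Set.Ioi (0:ℝ), G t) * M) a b at h
    rw [h, hPG]
  -- scalar integrability
  have hGab_int : ∀ a b : Fin n, IntegrableOn (fun t : ℝ => G t a b) (Set.Ioi 0) := by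
    intro a b
    refine Integrable.mono' hgbound ((hGcont_entry a b).aestronglyMeasurable.restrict) ?_
    rw [ae_restrict_iff' measurableSet_Ioi]
    refine Filter.Eventually.of_forall fun t ht => ?_
    rw [Real.norm_eq_abs]
    exact hGbd t (le_of_lt ht) a b
  have hHab_int : ∀ a b : Fin n,
      IntegrableOn (fun t : ℝ => (M * G t * M) a b) (Set.Ioi 0) := by
    intro a b
    have hfe : (fun t : ℝ => (M * G t * M) a b)
        = fun t => ∑ c, ∑ d, M a c * G t c d * M d b :=
      funext fun t => mul3_apply M (G t) M a b
    rw [hfe]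
    refine integrable_finset_sum _ fun c _ => integrable_finset_sum _ fun d _ => ?_
    have : (fun t : ℝ => M a c * G t c d * M d b)
        = fun t => (G t c d) * (M a c * M d b) := by funext t; ring
    rw [this]
    exact (hGab_int c d).mul_const _
  -- the main computation
  have hMT : Mᵀ = M := hM
  calc (∫ σ : ℝ × ℝ in Set.Ioi (0:ℝ) ×ˢ Set.Ioi (0:ℝ),
      ∑ i, ∑ j, ((Bᵀ * exp (σ.1 • Aᵀ) * M * exp (σ.2 • A) * B) i j) ^ 2)
      = ∫ σ : ℝ × ℝ in Set.Ioi (0:ℝ) ×ˢ Set.Ioi (0:ℝ),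
          ∑ p : Fin n × Fin n, (M * G σ.1 * M) p.1 p.2 * G σ.2 p.2 p.1 := by
        refine integral_congr_ae (Filter.Eventually.of_forall fun σ => ?_)
        have h1 := kernel_trace_identity B M hMT (E σ.1) (E σ.2)
        dsimp only
        rw [hET σ.1]
        show ∑ i, ∑ j, ((Bᵀ * (E σ.1)ᵀ * M * exp (σ.2 • A) * B) i j) ^ 2 = _
        rw [show exp (σ.2 • A) = E σ.2 from rfl, h1]
    _ = ∫ σ : ℝ × ℝ, (∑ p : Fin n × Fin n, (M * G σ.1 * M) p.1 p.2 * G σ.2 p.2 p.1)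
          ∂((volume.restrict (Set.Ioi 0)).prod (volume.restrict (Set.Ioi 0))) := by
        rw [Measure.volume_eq_prod, Measure.prod_restrict]
    _ = ∑ p : Fin n × Fin n, ∫ σ : ℝ × ℝ, (M * G σ.1 * M) p.1 p.2 * G σ.2 p.2 p.1
          ∂((volume.restrict (Set.Ioi 0)).prod (volume.restrict (Set.Ioi 0))) := by
        refine integral_finset_sum _ fun p _ => ?_
        exact (hHab_int p.1 p.2).mul_prod (hGab_int p.2 p.1)
    _ = ∑ p : Fin n × Fin n, (∫ t in Set.Ioi (0:ℝ), (M * G t * M) p.1 p.2)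
          * (∫ t in Set.Ioi (0:ℝ), G t p.2 p.1) := by
        refine Finset.sum_congr rfl fun p _ => ?_
        exact integral_prod_mul (fun t => (M * G t * M) p.1 p.2) (fun t => G t p.2 p.1)
    _ = ∑ p : Fin n × Fin n, (M * P * M) p.1 p.2 * P p.2 p.1 := by
        refine Finset.sum_congr rfl fun p _ => ?_
        rw [hHab p.1 p.2, hPab p.2 p.1]
    _ = ((M * P * M) * P).trace := (trace_mul_eq_sum_prod _ _).symm
    _ = (P * M * P * M).trace := by
        rw [Matrix.trace_mul_comm]
        simp only [Matrix.mul_assoc]
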